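/- Let E_2 = (y_1 y_{12}, y_2 y_{12}) in k[y_1, y_2, y_{12}]. For every r ≥ 1, E_2^r = (y_{12})^r ∩ (y_1, y_2)^r; in particular the r-th symbolic power of E_2 equals E_2^r. -/

import Mathlib

open MvPolynomial

/-- Index type: nonempty subsets of `[q]`. -/
abbrev EIdx (q : ℕ) := {A : Finset (Fin q) // A.Nonempty}

/-- The generator `ε_i = ∏_{A ∋ i} y_A` of the extremal ideal. -/
noncomputable def extGen (k : Type*) [Field k] (q : ℕ) (i : Fin q) :
    MvPolynomial (EIdx q) k :=
  ∏ A : EIdx q, if i ∈ A.1 then X A else 1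

/-- The `q`-extremal ideal `E_q = (ε_1, …, ε_q)`. -/
noncomputable def extIdeal (k : Type*) [Field k] (q : ℕ) :
    Ideal (MvPolynomial (EIdx q) k) :=
  Ideal.span (Set.range (extGen k q))

/-- The `r`-th symbolic power of a square-free monomial ideal: the intersection
of the `r`-th powers of its minimal primes. -/
def symbPow {R : Type*} [CommRing R] (I : Ideal R) (r : ℕ) : Ideal R :=
  ⨅ P ∈ I.minimalPrimes, P ^ r

noncomputable section
namespace St12

abbrev B0 : EIdx 2 := ⟨{0}, Finset.singleton_nonempty 0⟩
abbrev B1 : EIdx 2 := ⟨{1}, Finset.singleton_nonempty 1⟩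
abbrev B01 : EIdx 2 := ⟨Finset.univ, Finset.univ_nonempty⟩

def e : EIdx 2 ≃ Option (Fin 2) where
  toFun A := if (0:Fin 2) ∈ A.1 then (if (1:Fin 2) ∈ A.1 then none else some 0) else some 1
  invFun o := o.elim B01 (fun i => ⟨{i}, Finset.singleton_nonempty i⟩)
  left_inv := by decide
  right_inv := by decide

variable (k : Type*) [Field k]

def Φ : MvPolynomial (EIdx 2) k ≃ₐ[k] Polynomial (MvPolynomial (Fin 2) k) :=
  (renameEquiv k e).trans (optionEquivLeft k (Fin 2))

lemma Φ_x : Φ k (X B0) = Polynomial.C (X 0) := by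
  simp [Φ, e, optionEquivLeft_X_some]

lemma Φ_y : Φ k (X B1) = Polynomial.C (X 1) := by
  simp [Φ, e, optionEquivLeft_X_some]

lemma Φ_z : Φ k (X B01) = Polynomial.X := by
  simp [Φ, e, optionEquivLeft_X_none]

def P : Ideal (MvPolynomial (EIdx 2) k) := Ideal.span {X B01}
def Q : Ideal (MvPolynomial (EIdx 2) k) := Ideal.span {X B0, X B1}
def J : Ideal (MvPolynomial (Fin 2) k) := Ideal.span {X 0, X 1}

lemma hmapQ : Ideal.map (Φ k).toRingEquiv (Q k) =
    Ideal.map (Polynomial.C) (J k) := by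
  rw [Q, J, Ideal.map_span, Ideal.map_span]
  congr 1
  simp only [Set.image_insert_eq, Set.image_singleton]
  rw [show ((Φ k).toRingEquiv : MvPolynomial (EIdx 2) k → _) = (Φ k : MvPolynomial (EIdx 2) k → _) from rfl]
  rw [Φ_x, Φ_y]

lemma hmapP : Ideal.map (Φ k).toRingEquiv (P k) =
    Ideal.span {(Polynomial.X : Polynomial (MvPolynomial (Fin 2) k))} := by
  rw [P, Ideal.map_span]
  simp only [Set.image_singleton]
  rw [show ((Φ k).toRingEquiv : MvPolynomial (EIdx 2) k → _) = (Φ k : MvPolynomial (EIdx 2) k → _) from rfl]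
  rw [Φ_z]

lemma J_prime : (J k).IsPrime := by
  have h : J k = RingHom.ker (constantCoeff : MvPolynomial (Fin 2) k →+* k) := by
    have himg : ({X 0, X 1} : Set (MvPolynomial (Fin 2) k)) = X '' Set.univ := by
      rw [Set.image_univ]
      ext p
      simp [eq_comm, Fin.exists_fin_two]
    ext f
    rw [RingHom.mem_ker, J, himg, mem_ideal_span_X_image]
    constructor
    · intro h
      by_contra hne
      have h0 : (0 : Fin 2 →₀ ℕ) ∈ f.support := by
        rw [mem_support_iff]; simpa [constantCoeff_eq] using hne
      obtain ⟨i, -, hi⟩ := h 0 h0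
      simp at hi
    · intro h m hm
      by_contra h'
      push_neg at h'
      have hm0 : m = 0 := by ext i; simpa using h' i (Set.mem_univ i)
      rw [hm0, mem_support_iff] at hm
      exact hm (by simpa [constantCoeff_eq] using h)
  rw [h]
  exact RingHom.ker_isPrime _

lemma Q_prime : (Q k).IsPrime := by
  have h : Q k = Ideal.comap (Φ k).toRingEquiv (Ideal.map Polynomial.C (J k)) := by
    ext x
    rw [Ideal.mem_comap, ← hmapQ, Ideal.apply_mem_of_equiv_iff]
  rw [h]
  haveI := J_prime k
  haveI : (Ideal.map (Polynomial.C : MvPolynomial (Fin 2) k →+* _) (J k)).IsPrime :=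
    Ideal.isPrime_map_C_of_isPrime
  exact Ideal.IsPrime.comap _

lemma P_prime : (P k).IsPrime := by
  have h : P k = Ideal.comap (Φ k).toRingEquiv
      (Ideal.span {(Polynomial.X : Polynomial (MvPolynomial (Fin 2) k))}) := by
    ext x
    rw [Ideal.mem_comap, ← hmapP, Ideal.apply_mem_of_equiv_iff]
  rw [h]
  haveI := (Ideal.span_singleton_prime Polynomial.X_ne_zero).mpr
    (Polynomial.prime_X (R := MvPolynomial (Fin 2) k))
  exact Ideal.IsPrime.comap _

lemma x_not_mem_P : X B0 ∉ P k := by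
  rw [P, show ({X B01} : Set (MvPolynomial (EIdx 2) k)) = X '' {B01} by simp,
    mem_ideal_span_X_image]
  intro h
  obtain ⟨i, hi, hne⟩ := h (Finsupp.single B0 1) (by simp [support_X])
  simp only [Set.mem_singleton_iff] at hi
  subst hi
  simp only [Finsupp.single_apply] at hne
  rw [if_neg (by decide)] at hne
  exact hne rfl

lemma z_not_mem_Q : X B01 ∉ Q k := by
  rw [Q, show ({X B0, X B1} : Set (MvPolynomial (EIdx 2) k)) = X '' {B0, B1} from (Set.image_pair X B0 B1).symm,
    mem_ideal_span_X_image]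
  intro h
  obtain ⟨i, hi, hne⟩ := h (Finsupp.single B01 1) (by simp [support_X])
  rcases hi with rfl | rfl <;>
    [skip; skip] <;>
    · simp only [Finsupp.single_apply] at hne
      rw [if_neg (by decide)] at hne
      exact hne rfl

/-- Saturation: if `z^r * g ∈ Q^r` then `g ∈ Q^r`. -/
lemma sat (r : ℕ) (g : MvPolynomial (EIdx 2) k)
    (h : (X B01) ^ r * g ∈ Q k ^ r) : g ∈ Q k ^ r := by
  have h2 : (Φ k).toRingEquiv ((X B01) ^ r * g) ∈ Ideal.map (Φ k).toRingEquiv (Q k ^ r) :=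
    Ideal.mem_map_of_mem _ h
  rw [Ideal.map_pow, hmapQ, ← Ideal.map_pow] at h2
  have h2' : Polynomial.X ^ r * (Φ k) g ∈ Ideal.map Polynomial.C (J k ^ r) := by
    have : ((Φ k).toRingEquiv) ((X B01) ^ r * g)
        = Polynomial.X ^ r * (Φ k) g := by
      show (Φ k) ((X B01) ^ r * g) = _
      rw [map_mul, map_pow, Φ_z]
    rwa [this] at h2
  rw [Ideal.mem_map_C_iff] at h2'
  have h3 : (Φ k) g ∈ Ideal.map Polynomial.C (J k ^ r) := by
    rw [Ideal.mem_map_C_iff]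
    intro n
    have := h2' (n + r)
    rwa [mul_comm, Polynomial.coeff_mul_X_pow] at this
  rw [Ideal.map_pow, ← hmapQ, ← Ideal.map_pow] at h3
  have h4 : (Φ k).toRingEquiv g ∈ Ideal.map (Φ k).toRingEquiv (Q k ^ r) := h3
  rwa [Ideal.apply_mem_of_equiv_iff] at h4

lemma univ_eq : (Finset.univ : Finset (EIdx 2)) = {B0, B1, B01} := by decide

lemma extGen0 : extGen k 2 0 = X B0 * X B01 := by
  rw [extGen, univ_eq, Finset.prod_insert (by decide), Finset.prod_insert (by decide),
    Finset.prod_singleton, if_pos (by decide), if_neg (by decide), if_pos (by decide), one_mul]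

lemma extGen1 : extGen k 2 1 = X B1 * X B01 := by
  rw [extGen, univ_eq, Finset.prod_insert (by decide), Finset.prod_insert (by decide),
    Finset.prod_singleton, if_neg (by decide), if_pos (by decide), if_pos (by decide), one_mul]

lemma hrange : Set.range (extGen k 2) = {extGen k 2 0, extGen k 2 1} := by
  ext f
  simp [Fin.exists_fin_two, eq_comm]

lemma hE : extIdeal k 2 = P k * Q k := by
  rw [extIdeal, hrange, extGen0, extGen1, P, Q]
  rw [show (X B0 * X B01 : MvPolynomial (EIdx 2) k) = X B01 * X B0 from mul_comm _ _,
    show (X B1 * X B01 : MvPolynomial (EIdx 2) k) = X B01 * X B1 from mul_comm _ _,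
    Ideal.span_insert (X B01 * X B0), Ideal.span_insert (X B0),
    Ideal.mul_sup, Ideal.span_singleton_mul_span_singleton,
    Ideal.span_singleton_mul_span_singleton]

lemma part1 (r : ℕ) : extIdeal k 2 ^ r = P k ^ r ⊓ Q k ^ r := by
  refine le_antisymm ?_ ?_
  · rw [hE, mul_pow]
    exact Ideal.mul_le_inf
  · intro f hf
    obtain ⟨hfP, hfQ⟩ := hf
    rw [SetLike.mem_coe, P, Ideal.span_singleton_pow, Ideal.mem_span_singleton] at hfP
    rw [SetLike.mem_coe] at hfQ
    obtain ⟨g, rfl⟩ := hfP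
    have hg : g ∈ Q k ^ r := sat k r g hfQ
    rw [hE, mul_pow, P, Ideal.span_singleton_pow]
    exact Ideal.mul_mem_mul (Ideal.mem_span_singleton_self _) hg

lemma E_le_P : extIdeal k 2 ≤ P k := by rw [hE]; exact (Ideal.mul_le_left : P k * Q k ≤ P k)

lemma E_le_Q : extIdeal k 2 ≤ Q k := by rw [hE]; exact (Ideal.mul_le_right : P k * Q k ≤ Q k)

lemma key (p : Ideal (MvPolynomial (EIdx 2) k)) (hp : p.IsPrime)
    (hle : extIdeal k 2 ≤ p) : P k ≤ p ∨ Q k ≤ p := by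
  have h0 : X B0 * X B01 ∈ p := by
    have h : extGen k 2 0 ∈ extIdeal k 2 := Ideal.subset_span ⟨0, rfl⟩
    rw [extGen0] at h
    exact hle h
  have h1 : X B1 * X B01 ∈ p := by
    have h : extGen k 2 1 ∈ extIdeal k 2 := Ideal.subset_span ⟨1, rfl⟩
    rw [extGen1] at h
    exact hle h
  by_cases hz : X B01 ∈ p
  · left
    rw [P, Ideal.span_le, Set.singleton_subset_iff]
    exact hz
  · right
    rw [Q, Ideal.span_le, Set.insert_subset_iff, Set.singleton_subset_iff]
    constructor
    · rcases hp.mem_or_mem h0 with h | h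
      · exact h
      · exact absurd h hz
    · rcases hp.mem_or_mem h1 with h | h
      · exact h
      · exact absurd h hz

lemma x_mem_Q : X B0 ∈ Q k := Ideal.subset_span (Set.mem_insert _ _)

lemma z_mem_P : X B01 ∈ P k := Ideal.mem_span_singleton_self _

lemma hminset : (extIdeal k 2).minimalPrimes = {P k, Q k} := by
  ext p
  simp only [Ideal.minimalPrimes, Set.mem_setOf_eq, Set.mem_insert_iff,
    Set.mem_singleton_iff]
  constructor
  · rintro ⟨⟨hp, hle⟩, hmin⟩
    rcases key k p hp hle with h | h
    · left; exact le_antisymm (hmin ⟨P_prime k, E_le_P k⟩ h) h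
    · right; exact le_antisymm (hmin ⟨Q_prime k, E_le_Q k⟩ h) h
  · rintro (rfl | rfl)
    · refine ⟨⟨P_prime k, E_le_P k⟩, ?_⟩
      intro b hb hble
      rcases key k b hb.1 hb.2 with h | h
      · exact h
      · exact absurd (hble (h (x_mem_Q k))) (x_not_mem_P k)
    · refine ⟨⟨Q_prime k, E_le_Q k⟩, ?_⟩
      intro b hb hble
      rcases key k b hb.1 hb.2 with h | h
      · exact absurd (hble (h (z_mem_P k))) (z_not_mem_Q k)
      · exact h

end St12
end


theorem stmt12 (k : Type*) [Field k] (r : ℕ) (hr : 1 ≤ r) :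
    (extIdeal k 2) ^ r =
      (Ideal.span {(X (⟨Finset.univ, Finset.univ_nonempty⟩ : EIdx 2) :
          MvPolynomial (EIdx 2) k)}) ^ r ⊓
      (Ideal.span {(X (⟨{0}, Finset.singleton_nonempty 0⟩ : EIdx 2) :
          MvPolynomial (EIdx 2) k),
        (X (⟨{1}, Finset.singleton_nonempty 1⟩ : EIdx 2) :
          MvPolynomial (EIdx 2) k)}) ^ r ∧
    symbPow (extIdeal k 2) r = (extIdeal k 2) ^ r := by
  constructor
  · exact St12.part1 k r
  · rw [symbPow, St12.hminset, iInf_pair]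
    exact (St12.part1 k r).symm
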